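/- In ℤ[k], the element ε is irreducible; moreover, for every integer x with x ≠ 1 and x ≠ −1, the element x·ε is not irreducible. -/

import Mathlib

open DualNumber

/-- In ℤ[k], `ε` is irreducible, and for every integer `x ≠ ±1`, `x·ε` is not
irreducible. -/
theorem eps_irreducible_and_xe_reducible :
    Irreducible (ε : DualNumber ℤ) ∧
    ∀ x : ℤ, x ≠ 1 → x ≠ -1 → ¬ Irreducible ((x : DualNumber ℤ) * ε) := by
  constructor
  · constructor
    · rw [TrivSqZeroExt.isUnit_iff_isUnit_fst]
      simp [DualNumber.fst_eps]
    · intro a b hab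
      have h1 : a.fst * b.fst = 0 := by
        have := congrArg TrivSqZeroExt.fst hab
        simpa [TrivSqZeroExt.fst_mul, DualNumber.fst_eps] using this.symm
      have h2 : a.fst * b.snd + b.fst * a.snd = 1 := by
        have := congrArg TrivSqZeroExt.snd hab
        simpa [TrivSqZeroExt.snd_mul, DualNumber.fst_eps, DualNumber.snd_eps, mul_comm] using this.symm
      rcases mul_eq_zero.mp h1 with h | h
      · right
        rw [TrivSqZeroExt.isUnit_iff_isUnit_fst, Int.isUnit_iff]
        rw [h, zero_mul, zero_add] at h2
        exact (Int.isUnit_iff.mp (IsUnit.of_mul_eq_one _ h2))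
      · left
        rw [TrivSqZeroExt.isUnit_iff_isUnit_fst, Int.isUnit_iff]
        rw [h, zero_mul, add_zero] at h2
        exact (Int.isUnit_iff.mp (IsUnit.of_mul_eq_one _ h2))
  · intro x hx1 hxm1 hirr
    by_cases hx0 : x = 0
    · subst hx0
      simp only [Int.cast_zero, zero_mul] at hirr
      exact not_irreducible_zero hirr
    · rcases hirr.isUnit_or_isUnit rfl with h | h
      · rw [TrivSqZeroExt.isUnit_iff_isUnit_fst, Int.isUnit_iff] at h
        simp at h
        tauto
      · rw [TrivSqZeroExt.isUnit_iff_isUnit_fst] at h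
        simp [DualNumber.fst_eps] at h
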